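/- Let ρ : ℝ → [0,∞) be a C², 2π-periodic function. Then 3·∫₀^{2π} ((ρ(v) + ρ(v+π))/2)² dv − (2/π)·(∫₀^{2π} ρ(v) dv)² − ∫₀^{2π} ρ'(v)² dv + ∫₀^{2π} ρ(v)² dv ≤ 0. Equality holds if and only if ρ(v) = a + b·cos v + c·sin v + d·cos 2v + e·sin 2v for some constants a, b, c, d, e. -/

import Mathlib

open Real intervalIntegral

namespace Stmt18
open Complex MeasureTheory
noncomputable section

instance fact2pi : Fact ((0:ℝ) < 2*π) := ⟨by positivity⟩

lemma h2pi : (0:ℝ) < 2*π := by positivity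

/-- The `n`-th Fourier coefficient of `g` on `[0, 2π]`, as an explicit interval integral. -/
def IC (g : ℝ → ℂ) (n : ℤ) : ℂ :=
  (1/(2*(π:ℂ))) * ∫ x in (0:ℝ)..2*π, Complex.exp (-(n:ℂ) * x * Complex.I) * g x

lemma fourier_coe_gen (T : ℝ) (hT : T = 2*π) (n : ℤ) (x : ℝ) :
    fourier n (x : AddCircle T) = Complex.exp (n * x * Complex.I) := by
  subst hT; rw [fourier_coe_apply]; congr 1
  have h : (π:ℂ) ≠ 0 := Complex.ofReal_ne_zero.mpr pi_ne_zero
  field_simp; push_cast; ring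

lemma fourierCoeff_lift (g : ℝ → ℂ) (hp : Function.Periodic g (2*π)) (n : ℤ) :
    fourierCoeff hp.lift n = IC g n := by
  rw [fourierCoeff_eq_intervalIntegral _ n 0, zero_add, IC]
  rw [intervalIntegral.integral_congr
    (g := fun x => Complex.exp (-(n:ℂ) * x * Complex.I) * g x)
    (fun x _ => by
      rw [smul_eq_mul, Function.Periodic.lift_coe, fourier_coe_gen _ rfl]
      push_cast; ring_nf)]
  rw [Complex.real_smul]
  push_cast
  ring

lemma fourierCoeffOn_eq_IC (g : ℝ → ℂ) (n : ℤ) :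
    fourierCoeffOn h2pi g n = IC g n := by
  rw [fourierCoeffOn_eq_integral, IC]
  rw [intervalIntegral.integral_congr
    (g := fun x => Complex.exp (-(n:ℂ) * x * Complex.I) * g x)
    (fun x _ => by
      rw [smul_eq_mul, fourier_coe_gen _ (by ring)]
      push_cast; ring_nf)]
  rw [Complex.real_smul]
  push_cast
  ring

lemma cont_lift (g : ℝ → ℂ) (hg : Continuous g) (hp : Function.Periodic g (2*π)) :
    Continuous hp.lift :=
  (QuotientAddGroup.isQuotientMap_mk _).continuous_iff.mpr hg

lemma parseval (g : ℝ → ℂ) (hg : Continuous g) (hp : Function.Periodic g (2*π)) :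
    Summable (fun n => ‖IC g n‖^2) ∧
    ∑' n : ℤ, ‖IC g n‖^2 = (1/(2*π)) * ∫ x in (0:ℝ)..2*π, ‖g x‖^2 := by
  set G : C(AddCircle (2*π), ℂ) := ⟨hp.lift, cont_lift g hg hp⟩ with hG
  have hFC : ∀ n, fourierCoeff (⇑G) n = IC g n := fun n => fourierCoeff_lift g hp n
  set F := ContinuousMap.toLp (E := ℂ) 2 AddCircle.haarAddCircle ℂ G with hFdef
  have hF : ∀ n, fourierCoeff (F : AddCircle (2*π) → ℂ) n = IC g n :=
    fun n => (fourierCoeff_toLp G n).trans (hFC n)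
  have hsum : Summable (fun n : ℤ => ‖IC g n‖^2) := by
    have h1 := lp.memℓp (fourierBasis.repr F)
    rw [memℓp_gen_iff (by norm_num : (0:ℝ) < (2:ENNReal).toReal)] at h1
    have h2 : (fun n : ℤ => ‖fourierBasis.repr F n‖ ^ (2:ENNReal).toReal)
        = fun n : ℤ => ‖IC g n‖^2 := by
      funext n
      rw [fourierBasis_repr, hF n]
      norm_num
    rwa [h2] at h1
  refine ⟨hsum, ?_⟩
  have hpars := tsum_sq_fourierCoeff F
  simp_rw [hF] at hpars
  rw [hpars]
  -- now compute ∫ ‖F t‖^2 ∂haar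
  have hae : (F : AddCircle (2*π) → ℂ) =ᵐ[AddCircle.haarAddCircle] G :=
    ContinuousMap.coeFn_toLp (p := 2) (μ := AddCircle.haarAddCircle) (𝕜 := ℂ) G
  have h3 : ∫ t, ‖(F : AddCircle (2*π) → ℂ) t‖^2 ∂AddCircle.haarAddCircle
      = ∫ t, ‖G t‖^2 ∂AddCircle.haarAddCircle := by
    apply MeasureTheory.integral_congr_ae
    filter_upwards [hae] with t ht
    rw [ht]
  have hvol : ∫ t : AddCircle (2*π), ‖G t‖^2 = ∫ x in (0:ℝ)..2*π, ‖g x‖^2 := by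
    rw [← AddCircle.intervalIntegral_preimage (2*π) 0, zero_add]
    apply intervalIntegral.integral_congr
    intro x _
    simp [hG, Function.Periodic.lift_coe]
  rw [AddCircle.volume_eq_smul_haarAddCircle, MeasureTheory.integral_smul_measure,
    ENNReal.toReal_ofReal (by positivity : (0:ℝ) ≤ 2*π)] at hvol
  rw [h3]
  have h2pi' : (2*π:ℝ) ≠ 0 := by positivity
  rw [smul_eq_mul] at hvol
  field_simp at hvol ⊢
  linarith

lemma pointwise (g : ℝ → ℂ) (hg : Continuous g) (hp : Function.Periodic g (2*π))
    (hsum : Summable (IC g)) (v : ℝ) :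
    HasSum (fun j : ℤ => IC g j * Complex.exp (j * v * Complex.I)) (g v) := by
  set G : C(AddCircle (2*π), ℂ) := ⟨hp.lift, cont_lift g hg hp⟩ with hG
  have hFC : fourierCoeff (⇑G) = IC g := funext fun n => fourierCoeff_lift g hp n
  have h := has_pointwise_sum_fourier_series_of_summable (f := G)
    (by rw [hFC]; exact hsum) (v : AddCircle (2*π))
  rw [hFC] at h
  have hGv : G ((v : ℝ) : AddCircle (2*π)) = g v := by
    simp [hG, Function.Periodic.lift_coe]
  rw [hGv] at h
  convert h using 2 with j
  rw [fourier_coe_gen _ rfl, smul_eq_mul]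

lemma IC_deriv (f f' : ℝ → ℝ) (hd : ∀ x, HasDerivAt f (f' x) x) (hf' : Continuous f')
    (hper : Function.Periodic f (2*π)) (n : ℤ) :
    IC (fun x => (f' x : ℂ)) n = Complex.I * n * IC (fun x => (f x : ℂ)) n := by
  have hfb : f (2*π) = f 0 := by simpa using hper 0
  rcases eq_or_ne n 0 with rfl | hn
  · rw [IC]
    simp only [Int.cast_zero, neg_zero, zero_mul, Complex.exp_zero, one_mul]
    rw [intervalIntegral.integral_ofReal,
      intervalIntegral.integral_eq_sub_of_hasDerivAt (fun x _ => hd x)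
        (hf'.intervalIntegrable _ _), hfb]
    simp
  · have key := fourierCoeffOn_of_hasDerivAt h2pi hn
      (f := fun x => ((f x : ℝ) : ℂ)) (f' := fun x => ((f' x : ℝ) : ℂ))
      (fun x _ => (hd x).ofReal_comp)
      ((Complex.continuous_ofReal.comp hf').intervalIntegrable _ _)
    rw [fourierCoeffOn_eq_IC, fourierCoeffOn_eq_IC] at key
    have hb0 : ((f (2*π) : ℂ)) - ((f 0 : ℂ)) = 0 := by rw [hfb]; ring
    rw [hb0, mul_zero] at key
    have hπ : (π:ℂ) ≠ 0 := Complex.ofReal_ne_zero.mpr pi_ne_zero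
    have hnC : (n:ℂ) ≠ 0 := Int.cast_ne_zero.mpr hn
    have hI := Complex.I_ne_zero
    rw [key]
    field_simp
    push_cast
    ring

lemma int_exp_ne (m : ℤ) (hm : m ≠ 0) :
    ∫ x in (0:ℝ)..2*π, Complex.exp ((m:ℂ) * x * Complex.I) = 0 := by
  have hanti : ∀ x : ℝ, HasDerivAt
      (fun y : ℝ => ((2*π:ℝ):ℂ) / (-2 * π * Complex.I * ((-m : ℤ):ℂ)) * fourier m (y : AddCircle (2*π)))
      (fourier m (x : AddCircle (2*π)) : ℂ) x := by
    intro x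
    have := has_antideriv_at_fourier_neg fact2pi (n := -m) (neg_ne_zero.mpr hm) x
    simpa [neg_neg] using this
  have hcont : Continuous fun x : ℝ => (fourier m (x : AddCircle (2*π)) : ℂ) :=
    (map_continuous (fourier m)).comp (AddCircle.continuous_mk' _)
  have hint := intervalIntegral.integral_eq_sub_of_hasDerivAt (a := (0:ℝ)) (b := 2*π)
      (fun x _ => hanti x) (hcont.intervalIntegrable 0 (2*π))
  have hcoe : ((2*π : ℝ) : AddCircle (2*π)) = (((0:ℝ) : ℝ) : AddCircle (2*π)) := by
    have h := AddCircle.coe_add_period (2*π) 0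
    rw [zero_add] at h
    rw [h]
  rw [intervalIntegral.integral_congr (g := fun x : ℝ => (fourier m (x : AddCircle (2*π)) : ℂ))
    (fun x _ => (fourier_coe_gen _ rfl m x).symm)]
  rw [hint, hcoe]
  ring

lemma cexp_cont (c : ℂ) : Continuous fun x : ℝ => Complex.exp (c * x * Complex.I) :=
  Complex.continuous_exp.comp
    (((continuous_const.mul Complex.continuous_ofReal).mul continuous_const))

lemma IC_shift (g : ℝ → ℂ) (hg : Continuous g) (hp : Function.Periodic g (2*π)) (n : ℤ) :
    IC (fun x => g (x + π)) n = (-1:ℂ)^n * IC g n := by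
  rw [IC, IC]
  set H : ℝ → ℂ := fun y => Complex.exp (-(n:ℂ) * (y - π) * Complex.I) * g y with hH
  have h1 : ∀ x ∈ Set.uIcc (0:ℝ) (2*π),
      Complex.exp (-(n:ℂ) * x * Complex.I) * g (x + π) = H (x + π) := by
    intro x _
    simp only [hH]
    push_cast
    ring_nf
  rw [intervalIntegral.integral_congr h1, intervalIntegral.integral_comp_add_right]
  have hHper : Function.Periodic H (2*π) := by
    intro x
    simp only [hH, hp x]
    congr 1
    push_cast
    rw [show (-(n:ℂ) * (↑x + 2*↑π - ↑π) * Complex.I)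
        = -(n:ℂ)*(↑x-↑π)*Complex.I + ((-n:ℤ):ℂ) * (2*↑π*Complex.I) by push_cast; ring,
      Complex.exp_add, Complex.exp_int_mul_two_pi_mul_I, mul_one]
  have hshift := hHper.intervalIntegral_add_eq π 0
  rw [zero_add] at hshift
  rw [show (0:ℝ) + π = π by ring, show (2*π + π : ℝ) = π + 2*π by ring, hshift]
  have h2 : ∀ x ∈ Set.uIcc (0:ℝ) (2*π),
      H x = Complex.exp ((n:ℂ) * π * Complex.I) * (Complex.exp (-(n:ℂ) * x * Complex.I) * g x) := by
    intro x _
    simp only [hH]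
    rw [← mul_assoc, ← Complex.exp_add]
    congr 2
    push_cast
    ring
  rw [intervalIntegral.integral_congr h2, intervalIntegral.integral_const_mul]
  have h3 : Complex.exp ((n:ℂ) * π * Complex.I) = (-1:ℂ)^n := by
    rw [mul_assoc, Complex.exp_int_mul, Complex.exp_pi_mul_I]
  rw [h3]; ring

lemma IC_avg (g₁ g₂ : ℝ → ℂ) (h₁ : Continuous g₁) (h₂ : Continuous g₂) (n : ℤ) :
    IC (fun x => (g₁ x + g₂ x)/2) n = (IC g₁ n + IC g₂ n)/2 := by
  rw [IC, IC, IC]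
  rw [intervalIntegral.integral_congr
    (g := fun x => (Complex.exp (-(n:ℂ) * x * Complex.I) * g₁ x)/2
      + (Complex.exp (-(n:ℂ) * x * Complex.I) * g₂ x)/2) (fun x _ => by ring)]
  rw [intervalIntegral.integral_add (f := fun x => (Complex.exp (-(n:ℂ) * x * Complex.I) * g₁ x)/2)
    (g := fun x => (Complex.exp (-(n:ℂ) * x * Complex.I) * g₂ x)/2)
    ((((cexp_cont _).mul h₁).div_const 2).intervalIntegrable _ _)
    ((((cexp_cont _).mul h₂).div_const 2).intervalIntegrable _ _),
    intervalIntegral.integral_div, intervalIntegral.integral_div]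
  ring

lemma exp_eq_cos_sin (k x : ℝ) :
    Complex.exp ((k:ℂ) * x * Complex.I) = (Real.cos (k*x) : ℂ) + (Real.sin (k*x) : ℂ) * Complex.I := by
  rw [show ((k:ℂ) * x * Complex.I) = ((k*x : ℝ) : ℂ) * Complex.I by push_cast; ring,
    Complex.exp_mul_I]
  push_cast
  ring

lemma IC_poly (a b c d e : ℝ) (n : ℤ) (hn : n ∉ ({-2,-1,0,1,2} : Finset ℤ)) :
    IC (fun x => ((a + b*Real.cos x + c*Real.sin x + d*Real.cos (2*x) + e*Real.sin (2*x) : ℝ) : ℂ)) n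
      = 0 := by
  have hmem : n ≠ -2 ∧ n ≠ -1 ∧ n ≠ 0 ∧ n ≠ 1 ∧ n ≠ 2 := by
    simp only [Finset.mem_insert, Finset.mem_singleton] at hn
    tauto
  rw [IC]
  have hpoint : ∀ x ∈ Set.uIcc (0:ℝ) (2*π),
      Complex.exp (-(n:ℂ) * x * Complex.I)
        * ((a + b*Real.cos x + c*Real.sin x + d*Real.cos (2*x) + e*Real.sin (2*x) : ℝ) : ℂ)
      = ((a:ℂ)) * Complex.exp ((((0 - n : ℤ)):ℂ) * x * Complex.I)
        + ((b:ℂ) - (c:ℂ)*Complex.I)/2 * Complex.exp ((((1 - n : ℤ)):ℂ) * x * Complex.I)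
        + ((b:ℂ) + (c:ℂ)*Complex.I)/2 * Complex.exp ((((-1 - n : ℤ)):ℂ) * x * Complex.I)
        + ((d:ℂ) - (e:ℂ)*Complex.I)/2 * Complex.exp ((((2 - n : ℤ)):ℂ) * x * Complex.I)
        + ((d:ℂ) + (e:ℂ)*Complex.I)/2 * Complex.exp ((((-2 - n : ℤ)):ℂ) * x * Complex.I) := by
    intro x _
    have k1 : Complex.exp ((1:ℂ) * x * Complex.I)
        = (Real.cos x : ℂ) + (Real.sin x : ℂ) * Complex.I := by
      have := exp_eq_cos_sin 1 x
      push_cast at this ⊢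
      simpa using this
    have km1 : Complex.exp ((-1:ℂ) * x * Complex.I)
        = (Real.cos x : ℂ) - (Real.sin x : ℂ) * Complex.I := by
      have h := exp_eq_cos_sin (-1) x
      rw [show ((-1:ℝ)*x) = -x by ring, Real.cos_neg, Real.sin_neg] at h
      rw [show (((-1:ℝ)):ℂ) = (-1:ℂ) by norm_num] at h
      rw [h]; push_cast; ring
    have k2 : Complex.exp ((2:ℂ) * x * Complex.I)
        = (Real.cos (2*x) : ℂ) + (Real.sin (2*x) : ℂ) * Complex.I := by
      have := exp_eq_cos_sin 2 x
      push_cast at this ⊢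
      simpa using this
    have km2 : Complex.exp ((-2:ℂ) * x * Complex.I)
        = (Real.cos (2*x) : ℂ) - (Real.sin (2*x) : ℂ) * Complex.I := by
      have h := exp_eq_cos_sin (-2) x
      rw [show ((-2:ℝ)*x) = -(2*x) by ring, Real.cos_neg, Real.sin_neg] at h
      rw [show (((-2:ℝ)):ℂ) = (-2:ℂ) by norm_num] at h
      rw [h]; push_cast; ring
    rw [show (((0 - n : ℤ)):ℂ)*(x:ℂ)*Complex.I = -(n:ℂ)*x*Complex.I by push_cast; ring,
      show (((1 - n : ℤ)):ℂ)*(x:ℂ)*Complex.I = (1:ℂ)*x*Complex.I + -(n:ℂ)*x*Complex.I by push_cast; ring,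
      show (((-1 - n : ℤ)):ℂ)*(x:ℂ)*Complex.I = (-1:ℂ)*x*Complex.I + -(n:ℂ)*x*Complex.I by push_cast; ring,
      show (((2 - n : ℤ)):ℂ)*(x:ℂ)*Complex.I = (2:ℂ)*x*Complex.I + -(n:ℂ)*x*Complex.I by push_cast; ring,
      show (((-2 - n : ℤ)):ℂ)*(x:ℂ)*Complex.I = (-2:ℂ)*x*Complex.I + -(n:ℂ)*x*Complex.I by push_cast; ring,
      Complex.exp_add, Complex.exp_add, Complex.exp_add, Complex.exp_add,
      k1, km1, k2, km2]
    push_cast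
    linear_combination (Complex.exp (-(n:ℂ)*(x:ℂ)*Complex.I)
      * ((c:ℂ) * Complex.sin (x:ℂ) + (e:ℂ) * Complex.sin (2*(x:ℂ)))) * Complex.I_sq
  rw [intervalIntegral.integral_congr hpoint]
  have I0 : IntervalIntegrable (fun x:ℝ => (a:ℂ) * Complex.exp ((((0 - n : ℤ)):ℂ)*x*Complex.I))
      MeasureTheory.volume 0 (2*π) := (continuous_const.mul (cexp_cont _)).intervalIntegrable _ _
  have I1 : IntervalIntegrable (fun x:ℝ => ((b:ℂ) - (c:ℂ)*Complex.I)/2 * Complex.exp ((((1 - n : ℤ)):ℂ)*x*Complex.I))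
      MeasureTheory.volume 0 (2*π) := (continuous_const.mul (cexp_cont _)).intervalIntegrable _ _
  have I2 : IntervalIntegrable (fun x:ℝ => ((b:ℂ) + (c:ℂ)*Complex.I)/2 * Complex.exp ((((-1 - n : ℤ)):ℂ)*x*Complex.I))
      MeasureTheory.volume 0 (2*π) := (continuous_const.mul (cexp_cont _)).intervalIntegrable _ _
  have I3 : IntervalIntegrable (fun x:ℝ => ((d:ℂ) - (e:ℂ)*Complex.I)/2 * Complex.exp ((((2 - n : ℤ)):ℂ)*x*Complex.I))
      MeasureTheory.volume 0 (2*π) := (continuous_const.mul (cexp_cont _)).intervalIntegrable _ _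
  have I4 : IntervalIntegrable (fun x:ℝ => ((d:ℂ) + (e:ℂ)*Complex.I)/2 * Complex.exp ((((-2 - n : ℤ)):ℂ)*x*Complex.I))
      MeasureTheory.volume 0 (2*π) := (continuous_const.mul (cexp_cont _)).intervalIntegrable _ _
  rw [intervalIntegral.integral_add (((I0.add I1).add I2).add I3) I4,
    intervalIntegral.integral_add ((I0.add I1).add I2) I3,
    intervalIntegral.integral_add (I0.add I1) I2,
    intervalIntegral.integral_add I0 I1,
    intervalIntegral.integral_const_mul, intervalIntegral.integral_const_mul,
    intervalIntegral.integral_const_mul, intervalIntegral.integral_const_mul,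
    intervalIntegral.integral_const_mul,
    int_exp_ne (0 - n) (by omega), int_exp_ne (1 - n) (by omega),
    int_exp_ne (-1 - n) (by omega), int_exp_ne (2 - n) (by omega),
    int_exp_ne (-2 - n) (by omega)]
  simp

lemma sum_five (F : ℤ → ℂ) :
    ∑ j ∈ ({-2,-1,0,1,2} : Finset ℤ), F j = F (-2) + F (-1) + F 0 + F 1 + F 2 := by
  rw [Finset.sum_insert (by decide), Finset.sum_insert (by decide),
    Finset.sum_insert (by decide), Finset.sum_insert (by decide), Finset.sum_singleton]
  ring

lemma re_term (z : ℂ) (j : ℤ) (v : ℝ) :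
    (z * Complex.exp ((j:ℂ) * v * Complex.I)).re
      = z.re * Real.cos ((j:ℝ)*v) - z.im * Real.sin ((j:ℝ)*v) := by
  have h : Complex.exp ((j:ℂ) * v * Complex.I)
      = ((Real.cos ((j:ℝ)*v) : ℝ) : ℂ) + ((Real.sin ((j:ℝ)*v) : ℝ) : ℂ) * Complex.I := by
    rw [show ((j:ℂ) * v * Complex.I) = ((((j:ℝ)*v : ℝ)):ℂ) * Complex.I by push_cast; ring,
      Complex.exp_mul_I]
    push_cast
    ring
  rw [h]
  simp only [Complex.mul_re, Complex.mul_im, Complex.add_re, Complex.add_im,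
    Complex.ofReal_re, Complex.ofReal_im, Complex.I_re, Complex.I_im]
  ring

set_option maxHeartbeats 1600000 in

end
end Stmt18

set_option maxHeartbeats 1600000 in
open Stmt18 Complex MeasureTheory in
/-- Let `ρ : ℝ → [0,∞)` be `C²` and 2π-periodic.  Then
`3·∫₀^{2π} ((ρ(v)+ρ(v+π))/2)² dv − (2/π)·(∫₀^{2π} ρ)² − ∫₀^{2π} ρ'(v)² dv
  + ∫₀^{2π} ρ(v)² dv ≤ 0`,
with equality iff `ρ(v) = a + b cos v + c sin v + d cos 2v + e sin 2v` for some
constants `a, b, c, d, e`. -/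
theorem stmt18 (ρ : ℝ → ℝ) (hρsmooth : ContDiff ℝ 2 ρ) (hρnonneg : ∀ v, 0 ≤ ρ v)
    (hρper : Function.Periodic ρ (2 * π)) :
    3 * (∫ v in (0:ℝ)..(2 * π), ((ρ v + ρ (v + π)) / 2) ^ 2)
      - (2 / π) * (∫ v in (0:ℝ)..(2 * π), ρ v) ^ 2
      - (∫ v in (0:ℝ)..(2 * π), (deriv ρ v) ^ 2)
      + (∫ v in (0:ℝ)..(2 * π), (ρ v) ^ 2) ≤ 0
    ∧
    (3 * (∫ v in (0:ℝ)..(2 * π), ((ρ v + ρ (v + π)) / 2) ^ 2)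
      - (2 / π) * (∫ v in (0:ℝ)..(2 * π), ρ v) ^ 2
      - (∫ v in (0:ℝ)..(2 * π), (deriv ρ v) ^ 2)
      + (∫ v in (0:ℝ)..(2 * π), (ρ v) ^ 2) = 0
      ↔ ∃ a b c d e : ℝ, ∀ v : ℝ,
          ρ v = a + b * Real.cos v + c * Real.sin v
            + d * Real.cos (2 * v) + e * Real.sin (2 * v)) := by
  have hπ := Real.pi_pos
  set ρC : ℝ → ℂ := fun v => ((ρ v : ℝ) : ℂ) with hρC
  set ρ'C : ℝ → ℂ := fun v => ((deriv ρ v : ℝ) : ℂ) with hρ'C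
  set fC : ℝ → ℂ := fun v => (((ρ v + ρ (v + π))/2 : ℝ) : ℂ) with hfC
  have hρcont : Continuous ρ := hρsmooth.continuous
  have hρCcont : Continuous ρC := Complex.continuous_ofReal.comp hρcont
  have hρCper : Function.Periodic ρC (2*π) := fun x => by simp only [hρC, hρper x]
  have hd : ∀ x, HasDerivAt ρ (deriv ρ x) x := fun x =>
    ((hρsmooth.differentiable two_ne_zero) x).hasDerivAt
  have hρ'cont : Continuous (deriv ρ) := hρsmooth.continuous_deriv one_le_two
  have hρ'Ccont : Continuous ρ'C := Complex.continuous_ofReal.comp hρ'cont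
  have hρ'per : Function.Periodic (deriv ρ) (2*π) := by
    intro x
    have h1 : deriv (fun y => ρ (y + 2*π)) x = deriv ρ (x + 2*π) :=
      deriv_comp_add_const ρ (2*π) x
    have h2 : (fun y => ρ (y + 2*π)) = ρ := funext fun y => hρper y
    rw [← h1, h2]
  have hρ'Cper : Function.Periodic ρ'C (2*π) := fun x => by simp only [hρ'C, hρ'per x]
  have hfCper : Function.Periodic fC (2*π) := by
    intro x
    simp only [hfC]
    rw [show x + 2*π + π = (x + π) + 2*π by ring, hρper x, hρper (x+π)]
  have hfCcont : Continuous fC :=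
    Complex.continuous_ofReal.comp
      ((hρcont.add (hρcont.comp (continuous_id.add continuous_const))).div_const 2)
  -- coefficients
  set c : ℤ → ℂ := IC ρC with hc
  set P : ℤ → ℝ := fun n => ‖c n‖^2 with hP
  have hPnonneg : ∀ n, 0 ≤ P n := fun n => sq_nonneg _
  have hder : ∀ n, IC ρ'C n = Complex.I * n * c n := fun n =>
    IC_deriv ρ (deriv ρ) hd hρ'cont hρper n
  have hnormInt : ∀ n : ℤ, ‖((n:ℤ):ℂ)‖^2 = (n:ℝ)^2 := by
    intro n
    rw [show ((n:ℤ):ℂ) = (((n:ℝ):ℝ):ℂ) by push_cast; ring, Complex.norm_real,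
      Real.norm_eq_abs, _root_.sq_abs]
  have hQ : ∀ n, ‖IC ρ'C n‖^2 = (n:ℝ)^2 * P n := by
    intro n
    rw [hder n, norm_mul, norm_mul, Complex.norm_I, one_mul, mul_pow, hnormInt n, hP]
  have hfc : ∀ n, IC fC n = ((1 + (-1:ℂ)^n)/2) * c n := by
    intro n
    have h1 : fC = fun x => (ρC x + ρC (x+π))/2 := funext fun x => by
      simp only [hfC, hρC]; push_cast; ring
    rw [h1, IC_avg ρC (fun x => ρC (x+π)) hρCcont
      (hρCcont.comp (continuous_id.add continuous_const)) n,
      IC_shift ρC hρCcont hρCper n, hc]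
    ring
  have hR : ∀ n, ‖IC fC n‖^2 = (if Even n then (1:ℝ) else 0) * P n := by
    intro n
    rw [hfc n, norm_mul, mul_pow, hP]
    rcases Int.even_or_odd n with he | ho
    · rw [he.neg_one_zpow, if_pos he]
      norm_num
    · rw [ho.neg_one_zpow, if_neg (by simpa using (Int.not_even_iff_odd).mpr ho)]
      norm_num
  obtain ⟨hPs, hPsum⟩ := parseval ρC hρCcont hρCper
  obtain ⟨hQs, hQsum⟩ := parseval ρ'C hρ'Ccont hρ'Cper
  obtain ⟨hRs, hRsum⟩ := parseval fC hfCcont hfCper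
  rw [← hc] at hPs hPsum
  rw [show (fun n : ℤ => ‖c n‖^2) = P from rfl] at hPs hPsum
  set Qf : ℤ → ℝ := fun n => (n:ℝ)^2 * P n with hQf
  set Rf : ℤ → ℝ := fun n => (if Even n then (1:ℝ) else 0) * P n with hRf
  have hQs' : Summable Qf := hQs.congr hQ
  have hRs' : Summable Rf := hRs.congr hR
  have hQsum' : ∑' n, Qf n = (1/(2*π)) * ∫ x in (0:ℝ)..2*π, ‖ρ'C x‖^2 := by
    rw [← hQsum]; exact tsum_congr fun n => (hQ n).symm
  have hRsum' : ∑' n, Rf n = (1/(2*π)) * ∫ x in (0:ℝ)..2*π, ‖fC x‖^2 := by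
    rw [← hRsum]; exact tsum_congr fun n => (hR n).symm
  -- link to real integrals
  have hnormR : ∀ (g : ℝ → ℝ) (x : ℝ), ‖((g x : ℝ):ℂ)‖^2 = g x ^ 2 := fun g x => by
    rw [Complex.norm_real, Real.norm_eq_abs, _root_.sq_abs]
  have hI0 : (∫ v in (0:ℝ)..2*π, ρ v ^ 2) = 2*π * ∑' n, P n := by
    rw [hPsum]
    have : ∫ x in (0:ℝ)..2*π, ‖ρC x‖^2 = ∫ v in (0:ℝ)..2*π, ρ v ^ 2 :=
      intervalIntegral.integral_congr fun x _ => by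
        simp only [hρC]; exact hnormR ρ x
    rw [this, ← mul_assoc, mul_one_div, div_self (by positivity : (2*π:ℝ) ≠ 0), one_mul]
  have hI2 : (∫ v in (0:ℝ)..2*π, (deriv ρ v) ^ 2) = 2*π * ∑' n, Qf n := by
    rw [hQsum']
    have : ∫ x in (0:ℝ)..2*π, ‖ρ'C x‖^2 = ∫ v in (0:ℝ)..2*π, (deriv ρ v) ^ 2 :=
      intervalIntegral.integral_congr fun x _ => by
        simp only [hρ'C]; exact hnormR (deriv ρ) x
    rw [this, ← mul_assoc, mul_one_div, div_self (by positivity : (2*π:ℝ) ≠ 0), one_mul]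
  have hI1 : (∫ v in (0:ℝ)..2*π, ((ρ v + ρ (v + π))/2) ^ 2) = 2*π * ∑' n, Rf n := by
    rw [hRsum']
    have : ∫ x in (0:ℝ)..2*π, ‖fC x‖^2
        = ∫ v in (0:ℝ)..2*π, ((ρ v + ρ (v + π))/2) ^ 2 :=
      intervalIntegral.integral_congr fun x _ => by
        simp only [hfC]; exact hnormR (fun y => (ρ y + ρ (y + π))/2) x
    rw [this, ← mul_assoc, mul_one_div, div_self (by positivity : (2*π:ℝ) ≠ 0), one_mul]
  have hc0 : (∫ v in (0:ℝ)..2*π, ρ v)^2 = (2*π)^2 * P 0 := by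
    have h1 : c 0 = (1/(2*(π:ℂ))) * ((∫ v in (0:ℝ)..2*π, ρ v : ℝ) : ℂ) := by
      rw [hc, IC]
      congr 1
      simp only [Int.cast_zero, neg_zero, zero_mul, Complex.exp_zero, one_mul]
      rw [hρC]
      exact intervalIntegral.integral_ofReal
    have h2 : P 0 = (1/(2*π))^2 * (∫ v in (0:ℝ)..2*π, ρ v)^2 := by
      simp only [hP]
      rw [h1, norm_mul, mul_pow, Complex.norm_real, Real.norm_eq_abs, _root_.sq_abs]
      congr 1
      rw [show (1/(2*(π:ℂ))) = (((1/(2*π) : ℝ)):ℂ) by push_cast; ring, Complex.norm_real,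
        Real.norm_eq_abs, _root_.sq_abs]
    rw [h2, ← mul_assoc, ← mul_pow, mul_one_div, div_self (by positivity : (2*π:ℝ) ≠ 0),
      one_pow, one_mul]
  -- the S function
  set D : ℤ → ℝ := fun n => if n = 0 then 4 * P 0 else 0 with hD
  have hDs : Summable D := by
    apply summable_of_ne_finset_zero (s := {0})
    intro b hb
    simp only [hD, if_neg (by simpa using hb)]
  have hDsum : ∑' n, D n = 4 * P 0 := by
    rw [hD]; exact tsum_ite_eq (0:ℤ) (fun _ => 4 * P 0)
  set S : ℤ → ℝ := fun n => 3 * Rf n + P n - Qf n - D n with hS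
  have hAs : Summable (fun n => 3 * Rf n + P n - Qf n) :=
    ((hRs'.mul_left 3).add hPs).sub hQs'
  have hSs : Summable S := hAs.sub hDs
  have hSsum : ∑' n, S n = 3 * (∑' n, Rf n) + ∑' n, P n - ∑' n, Qf n - 4 * P 0 := by
    rw [hS, Summable.tsum_sub hAs hDs, hDsum, Summable.tsum_sub ((hRs'.mul_left 3).add hPs) hQs',
      Summable.tsum_add (hRs'.mul_left 3) hPs, tsum_mul_left]
  have hE : 3 * (∫ v in (0:ℝ)..(2 * π), ((ρ v + ρ (v + π)) / 2) ^ 2)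
      - (2 / π) * (∫ v in (0:ℝ)..(2 * π), ρ v) ^ 2
      - (∫ v in (0:ℝ)..(2 * π), (deriv ρ v) ^ 2)
      + (∫ v in (0:ℝ)..(2 * π), (ρ v) ^ 2) = 2*π * ∑' n, S n := by
    rw [hI1, hI2, hI0, hc0, hSsum]
    field_simp
    ring
  -- S is nonpositive
  have hSnonpos : ∀ n, S n ≤ 0 := by
    intro n
    simp only [hS, hRf, hQf, hD]
    by_cases h0 : n = 0
    · subst h0
      norm_num
      linarith
    · rw [if_neg h0]
      rcases Int.even_or_odd n with he | ho
      · rw [if_pos he]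
        have hn2 : (4:ℝ) ≤ (n:ℝ)^2 := by
          obtain ⟨k, rfl⟩ := he
          have hk : k ≠ 0 := by omega
          have h1 : (1:ℤ) ≤ k^2 := by
            rcases lt_or_gt_of_ne hk with h | h <;> nlinarith
          have h1' : (1:ℝ) ≤ (k:ℝ)^2 := by exact_mod_cast h1
          push_cast
          nlinarith
        nlinarith [hPnonneg n]
      · rw [if_neg (by simpa using (Int.not_even_iff_odd).mpr ho)]
        have hn2 : (1:ℝ) ≤ (n:ℝ)^2 := by
          have h1 : (1:ℤ) ≤ n^2 := by
            rcases lt_or_gt_of_ne h0 with h | h <;> nlinarith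
          exact_mod_cast h1
        nlinarith [hPnonneg n]
  constructor
  · rw [hE]
    exact mul_nonpos_of_nonneg_of_nonpos (by positivity) (tsum_nonpos hSnonpos)
  constructor
  · -- equality → trig polynomial
    intro hEq
    rw [hE] at hEq
    have hSum0 : ∑' n, S n = 0 := by
      rcases mul_eq_zero.mp hEq with h | h
      · exfalso; nlinarith
      · exact h
    have hS0 : ∀ n, S n = 0 := by
      intro n
      by_contra hne
      have hlt : S n < 0 := lt_of_le_of_ne (hSnonpos n) hne
      have hpos : 0 < ∑' m, (-S m) :=
        Summable.tsum_pos hSs.neg (fun i => neg_nonneg.mpr (hSnonpos i)) n (by linarith)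
      rw [tsum_neg, hSum0] at hpos
      norm_num at hpos
    have hczero : ∀ m ∉ ({-2,-1,0,1,2} : Finset ℤ), c m = 0 := by
      intro m hm
      have hm' : m ≠ -2 ∧ m ≠ -1 ∧ m ≠ 0 ∧ m ≠ 1 ∧ m ≠ 2 := by
        simp only [Finset.mem_insert, Finset.mem_singleton] at hm
        tauto
      have hSm := hS0 m
      simp only [hS, hRf, hQf, hD, if_neg hm'.2.2.1] at hSm
      have hPm : P m = 0 := by
        rcases Int.even_or_odd m with he | ho
        · rw [if_pos he] at hSm
          have hn2 : (16:ℝ) ≤ (m:ℝ)^2 := by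
            have h9 : m ≤ -4 ∨ 4 ≤ m := by
              obtain ⟨k, hk⟩ := he
              omega
            have : (16:ℤ) ≤ m^2 := by rcases h9 with h | h <;> nlinarith
            exact_mod_cast this
          nlinarith [hPnonneg m]
        · rw [if_neg (by simpa using (Int.not_even_iff_odd).mpr ho)] at hSm
          have hn2 : (9:ℝ) ≤ (m:ℝ)^2 := by
            have h9 : m ≤ -3 ∨ 3 ≤ m := by
              obtain ⟨k, hk⟩ := ho
              omega
            have : (9:ℤ) ≤ m^2 := by rcases h9 with h | h <;> nlinarith
            exact_mod_cast this
          nlinarith [hPnonneg m]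
      have : ‖c m‖ = 0 := by
        have h1 : ‖c m‖^2 = 0 := by simpa [hP] using hPm
        exact (pow_eq_zero_iff two_ne_zero).mp h1
      exact norm_eq_zero.mp this
    have hsummc : Summable c := summable_of_ne_finset_zero hczero
    refine ⟨(c 0).re, (c 1).re + (c (-1)).re, (c (-1)).im - (c 1).im,
      (c 2).re + (c (-2)).re, (c (-2)).im - (c 2).im, fun v => ?_⟩
    have hps := pointwise ρC hρCcont hρCper (by rwa [← hc]) v
    have h5 : HasSum (fun j : ℤ => c j * Complex.exp ((j:ℂ) * v * Complex.I))
        (∑ j ∈ ({-2,-1,0,1,2} : Finset ℤ), c j * Complex.exp ((j:ℂ) * v * Complex.I)) :=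
      hasSum_sum_of_ne_finset_zero (fun j hj => by rw [hczero j hj, zero_mul])
    have heq : ρC v = ∑ j ∈ ({-2,-1,0,1,2} : Finset ℤ), c j * Complex.exp ((j:ℂ) * v * Complex.I) := by
      refine HasSum.unique ?_ h5
      rw [← hc] at hps
      exact hps
    have hρv : ρ v = (ρC v).re := by simp [hρC]
    rw [hρv, heq, sum_five, Complex.add_re, Complex.add_re, Complex.add_re, Complex.add_re,
      re_term, re_term, re_term, re_term, re_term]
    push_cast
    simp only [neg_mul, one_mul, zero_mul, Real.cos_neg, Real.sin_neg, Real.cos_zero,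
      Real.sin_zero]
    ring
  · -- trig polynomial → equality
    rintro ⟨a, b, c', d, e, hform⟩
    have hCeq : ρC = fun x =>
        ((a + b*Real.cos x + c'*Real.sin x + d*Real.cos (2*x) + e*Real.sin (2*x) : ℝ) : ℂ) :=
      funext fun x => by
        show ((ρ x : ℝ) : ℂ) = _
        rw [hform x]
    have hPz : ∀ m ∉ ({-2,-1,0,1,2} : Finset ℤ), P m = 0 := by
      intro m hm
      have h0 := IC_poly a b c' d e m hm
      rw [← hCeq] at h0
      simp only [hP, hc, h0, norm_zero]
      norm_num
    have hS0 : ∀ n, S n = 0 := by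
      intro n
      by_cases hn : n ∈ ({-2,-1,0,1,2} : Finset ℤ)
      · simp only [Finset.mem_insert, Finset.mem_singleton] at hn
        rcases hn with rfl | rfl | rfl | rfl | rfl <;>
          (simp only [hS, hRf, hQf, hD]; norm_num [Int.even_iff]) <;>
          (try push_cast) <;> (try ring)
      · have hn0 : n ≠ 0 := fun h => hn (by simp [h])
        have := hPz n hn
        simp only [hS, hRf, hQf, hD, this, if_neg hn0, mul_zero]
        ring
    rw [hE, tsum_congr hS0, tsum_zero]
    ring
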